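/- If H is a nonabelian good group whose Frattini subgroup Φ(H) has order 2 and which has no direct factor of order 2, then H is an extraspecial 2-group, or the central product of an extraspecial 2-group with a cyclic group of order 4. -/

import Mathlib

open Subgroup Pointwise
open scoped commutatorElement

section AuxLemmas

lemma aux_mem_zpowers_of_odd {G : Type*} [Group G] (g : G) (n : ℕ)
    (hg : g ^ (2^n : ℕ) = 1) (j : ℤ) (hj : Odd j) : g ∈ zpowers (g ^ j) := by
  have hcop : IsCoprime j ((2:ℤ)^n) := by
    rw [Int.isCoprime_iff_gcd_eq_one]
    have : Nat.Coprime j.natAbs (2^n) :=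
      Nat.Coprime.pow_right n (Nat.coprime_two_right.mpr (Int.natAbs_odd.mpr hj))
    simpa [Int.gcd, Int.natAbs_pow] using this
  obtain ⟨u, v, huv⟩ := hcop
  have h2 : g ^ ((2:ℤ)^n) = 1 := by
    rw [show ((2:ℤ)^n) = ((2^n : ℕ) : ℤ) by push_cast; ring, zpow_natCast, hg]
  refine ⟨u, ?_⟩
  have key : g ^ (u * j) = g := by
    have h1 : g ^ (u*j + v*2^n) = g ^ (1:ℤ) := by rw [huv]
    rwa [zpow_add, zpow_one, mul_comm v ((2:ℤ)^n), zpow_mul g ((2:ℤ)^n) v, h2, one_zpow,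
      mul_one] at h1
  show (g ^ j) ^ u = g
  rw [← zpow_mul, mul_comm j u, key]

lemma aux_eq_one_or_eq {G : Type*} [Group G] {z x : G} (hz2 : z ^ 2 = 1)
    (hx : x ∈ zpowers z) : x = 1 ∨ x = z := by
  obtain ⟨k, hk⟩ := hx
  have hk' : z ^ k = x := hk
  have h2 : z ^ ((2:ℤ)) = 1 := by
    rw [show ((2:ℤ)) = ((2:ℕ):ℤ) by norm_num, zpow_natCast, hz2]
  rcases Int.even_or_odd k with ⟨m, hm⟩ | ⟨m, hm⟩
  · left
    rw [← hk', show (k : ℤ) = 2 * m by omega, zpow_mul, h2, one_zpow]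
  · right
    rw [← hk', hm, zpow_add, zpow_mul, h2, one_zpow, one_mul, zpow_one]

lemma aux_sq_mem_frattini {G : Type*} [Group G] (hp : IsPGroup 2 G)
    (hn : ∀ g : G, (zpowers (g^2)).Normal) (g : G) : g ^ 2 ∈ frattini G := by
  have : ∀ M : Subgroup G, IsCoatom M → g ^ 2 ∈ M := by
    intro M hM
    by_contra hgM
    have hsup : M ⊔ zpowers (g^2) = ⊤ := by
      refine hM.2 _ (lt_of_le_of_ne le_sup_left ?_)
      intro h
      exact hgM (h ▸ Subgroup.mem_sup_right (mem_zpowers (g^2)))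
    haveI := hn g
    have hg : g ∈ (M : Set G) * (zpowers (g^2) : Set G) := by
      rw [← Subgroup.mul_normal, hsup]; trivial
    obtain ⟨m, hm, y, hy, hmy⟩ := hg
    obtain ⟨k, hk⟩ := hy
    have hk' : (g^2) ^ k = y := hk
    have hmval : m = g ^ (1 - 2*k) := by
      have : m = g * y⁻¹ := by rw [← hmy]; group
      rw [this, ← hk', ← zpow_natCast g 2, ← zpow_mul]
      group
    obtain ⟨n, hn2⟩ := hp g
    have : g ∈ zpowers m := by
      rw [hmval]
      exact aux_mem_zpowers_of_odd g n hn2 _ ⟨-k, by ring⟩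
    have hgm : g ∈ M := (zpowers_le.mpr hm) this
    exact hgM (M.pow_mem hgm 2)
  exact Subgroup.mem_iInf.mpr fun M => Subgroup.mem_iInf.mpr fun hM => this M hM

lemma aux_zorn_avoid {G : Type*} [Group G] {z x : G} (hz2 : z ^ 2 = 1)
    (hsq : ∀ g : G, g^2 = 1 ∨ g^2 = z) (hcm : ∀ a b : G, ⁅a, b⁆ = 1 ∨ ⁅a, b⁆ = z)
    (hx1 : x ≠ 1) (hxz : x ≠ z) :
    ∃ K : Subgroup G, z ∈ K ∧ x ∉ K ∧ K.Normal ∧ K ⊔ zpowers x = ⊤ ∧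
      ∀ J : Subgroup G, K < J → J = ⊤ := by
  set s : Set (Subgroup G) := {K | z ∈ K ∧ x ∉ K} with hs
  have hzs : zpowers z ∈ s := by
    refine ⟨mem_zpowers z, fun hmem => ?_⟩
    rcases aux_eq_one_or_eq hz2 hmem with h | h
    · exact hx1 h
    · exact hxz h
  have hchain : ∀ c ⊆ s, IsChain (· ≤ ·) c → ∀ y ∈ c, ∃ ub ∈ s, ∀ J ∈ c, J ≤ ub := by
    intro c hcs hchain Y hY
    refine ⟨sSup c, ⟨?_, ?_⟩, fun J hJ => le_sSup hJ⟩
    · exact (le_sSup hY : Y ≤ sSup c) (hcs hY).1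
    · intro hxc
      rw [Subgroup.mem_sSup_of_directedOn ⟨Y, hY⟩ hchain.directedOn] at hxc
      obtain ⟨J, hJ, hxJ⟩ := hxc
      exact (hcs hJ).2 hxJ
  obtain ⟨K, -, hmax⟩ := zorn_le_nonempty₀ s hchain (zpowers z) hzs
  obtain ⟨hzK, hxK⟩ := hmax.1
  have hKnormal : K.Normal := by
    constructor
    intro k hk g
    have : g * k * g⁻¹ = ⁅g, k⁆ * k := by group
    rw [this]
    rcases hcm g k with h | h
    · rw [h, one_mul]; exact hk
    · rw [h]; exact K.mul_mem hzK hk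
  haveI := hKnormal
  have hstep : ∀ h : G, h ∉ K → ∃ k ∈ K, h = k * x := by
    intro h hh
    have hlt : K < K ⊔ zpowers h :=
      lt_of_le_of_ne le_sup_left (fun he => hh (he ▸ Subgroup.mem_sup_right (mem_zpowers h)))
    have hns : K ⊔ zpowers h ∉ s := fun hmem =>
      (not_le_of_gt hlt) (hmax.2 hmem le_sup_left)
    have hxin : x ∈ K ⊔ zpowers h := by
      by_contra hxin
      exact hns ⟨Subgroup.mem_sup_left hzK, hxin⟩
    have hx2 : x ∈ (K : Set G) * (zpowers h : Set G) := by
      rw [← Subgroup.normal_mul K (zpowers h)]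
      exact hxin
    obtain ⟨k, hk, y, hy, hky⟩ := hx2
    obtain ⟨j, hj⟩ := hy
    have hj' : h ^ j = y := hj
    have hsqK : h ^ (2:ℤ) ∈ K := by
      have : h ^ (2:ℤ) = h ^ (2:ℕ) := by
        rw [show ((2:ℤ)) = ((2:ℕ):ℤ) by norm_num, zpow_natCast]
      rw [this]
      rcases hsq h with h2 | h2
      · rw [h2]; exact K.one_mem
      · rw [h2]; exact hzK
    rcases Int.even_or_odd j with ⟨m, hm⟩ | ⟨m, hm⟩
    · exfalso
      have : y ∈ K := by
        rw [← hj', show j = 2 * m by omega, zpow_mul]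
        exact K.zpow_mem hsqK m
      exact hxK (hky ▸ K.mul_mem hk this)
    · have hyk : h ^ ((2:ℤ) * m) ∈ K := by
        rw [zpow_mul]; exact K.zpow_mem hsqK m
      have hxeq : x = (k * h ^ ((2:ℤ)*m)) * h := by
        rw [← hky, ← hj', hm, zpow_add, zpow_one, mul_assoc]
      refine ⟨(k * h ^ ((2:ℤ)*m))⁻¹, K.inv_mem (K.mul_mem hk hyk), ?_⟩
      rw [hxeq]; group
  have hsupx : K ⊔ zpowers x = ⊤ := by
    rw [eq_top_iff]
    intro g _
    by_cases hg : g ∈ K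
    · exact Subgroup.mem_sup_left hg
    · obtain ⟨k, hk, rfl⟩ := hstep g hg
      exact Subgroup.mul_mem _ (Subgroup.mem_sup_left hk) (Subgroup.mem_sup_right (mem_zpowers x))
  refine ⟨K, hzK, hxK, hKnormal, hsupx, ?_⟩
  intro J hJ
  obtain ⟨h, hhJ, hhK⟩ := SetLike.exists_of_lt hJ
  obtain ⟨k, hk, hkx⟩ := hstep h hhK
  have hxJ : x ∈ J := by
    have : x = k⁻¹ * h := by rw [hkx]; group
    rw [this]
    exact J.mul_mem (J.inv_mem (hJ.le hk)) hhJ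
  rw [eq_top_iff, ← hsupx]
  exact sup_le hJ.le (zpowers_le.mpr hxJ)

lemma aux_comm_mem {G : Type*} [Group G] {F : Subgroup G}
    (hc : ∀ f ∈ F, ∀ g : G, f * g = g * f) {a b : G}
    (h1 : (a*b)^2 ∈ F) (h2 : a^2 ∈ F) (h3 : b^2 ∈ F) : ⁅a, b⁆ ∈ F := by
  have h' : (a^2)⁻¹ * b⁻¹ = b⁻¹ * (a^2)⁻¹ := hc _ (F.inv_mem h2) b⁻¹
  have e : ⁅a, b⁆ = (a*b)^2 * (b^2)⁻¹ * (a^2)⁻¹ := by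
    rw [commutatorElement_def, pow_two, pow_two, pow_two]
    calc a * b * a⁻¹ * b⁻¹ = a*b*a*((a*a)⁻¹*b⁻¹) := by group
      _ = a*b*a*(b⁻¹*(a*a)⁻¹) := by rw [show (a^2)⁻¹ = (a*a)⁻¹ by rw [pow_two]] at h'; rw [h']
      _ = a*b*(a*b) * (b*b)⁻¹ * (a*a)⁻¹ := by group
  rw [e]
  exact F.mul_mem (F.mul_mem h1 (F.inv_mem h3)) (F.inv_mem h2)

lemma aux_comm_central_cancel {G : Type*} [Group G] (a b u v : G)
    (hu : ∀ g, u * g = g * u) (hv : ∀ g, v * g = g * v) : ⁅a*u, b*v⁆ = ⁅a, b⁆ := by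
  rw [commutatorElement_def, commutatorElement_def]
  calc a*u*(b*v)*(a*u)⁻¹*(b*v)⁻¹
      = a*(u*b)*v*u⁻¹*a⁻¹*v⁻¹*b⁻¹ := by group
    _ = a*(b*u)*v*u⁻¹*a⁻¹*v⁻¹*b⁻¹ := by rw [hu b]
    _ = a*b*u*(v*u⁻¹)*a⁻¹*v⁻¹*b⁻¹ := by group
    _ = a*b*u*(u⁻¹*v)*a⁻¹*v⁻¹*b⁻¹ := by rw [hv u⁻¹]
    _ = a*b*(v*a⁻¹)*v⁻¹*b⁻¹ := by group
    _ = a*b*(a⁻¹*v)*v⁻¹*b⁻¹ := by rw [hv a⁻¹]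
    _ = a*b*a⁻¹*b⁻¹ := by group

lemma aux_mem_zpowers_four {G : Type*} [Group G] {c x : G} (hc4 : c ^ (4:ℕ) = 1)
    (hx : x ∈ zpowers c) : x = 1 ∨ x = c ∨ x = c^2 ∨ x = c^2*c := by
  obtain ⟨j, hj⟩ := hx
  have hj' : c ^ j = x := hj
  have h4 : c ^ ((4:ℤ)) = 1 := by
    rw [show ((4:ℤ)) = ((4:ℕ):ℤ) by norm_num, zpow_natCast, hc4]
  have key : ∀ r : ℤ, j = 4 * (j/4) + r → c ^ j = c ^ r := by
    intro r hr
    rw [hr, zpow_add, zpow_mul, h4, one_zpow, one_mul]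
  have hr0 : j = 4 * (j/4) + j % 4 := (Int.mul_ediv_add_emod j 4).symm
  have hrl : 0 ≤ j % 4 := Int.emod_nonneg j (by norm_num)
  have hru : j % 4 < 4 := Int.emod_lt_of_pos j (by norm_num)
  have hxr : x = c ^ (j % 4) := by rw [← hj']; exact key _ hr0
  interval_cases h : (j % 4)
  · left; rw [hxr]; norm_num
  · right; left; rw [hxr]; norm_num
  · right; right; left; rw [hxr]
    rw [show ((2:ℤ)) = ((2:ℕ):ℤ) by norm_num, zpow_natCast]
  · right; right; right; rw [hxr]
    rw [show ((3:ℤ)) = ((2:ℕ):ℤ) + 1 by norm_num, zpow_add, zpow_natCast, zpow_one]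

lemma aux_isCyclic_zpowers {G : Type*} [Group G] (c : G) : IsCyclic (zpowers c) := by
  refine ⟨⟨⟨c, mem_zpowers c⟩, fun x => ?_⟩⟩
  obtain ⟨x, hx⟩ := x
  obtain ⟨k, hk⟩ := hx
  have hk' : c ^ k = x := hk
  have hco : ((⟨c, mem_zpowers c⟩ : zpowers c) ^ k : G) = c ^ k := by push_cast; rfl
  exact ⟨k, Subtype.ext (hco.trans hk')⟩

end AuxLemmas


/-- A group is *dihedral* if it is isomorphic to some `DihedralGroup n` with `n ≠ 0`. -/
def IsDihedralGroup (Q : Type*) [Group Q] : Prop :=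
  ∃ n : ℕ, n ≠ 0 ∧ Nonempty (Q ≃* DihedralGroup n)

/-- A 2-group `G` is *good* if for all `g h : G` the subgroup `⟨g²⟩` is normal in `G`
and the quotient `⟨g,h⟩/⟨g²⟩` is abelian or dihedral. -/
def IsGood (G : Type*) [Group G] : Prop :=
  IsPGroup 2 G ∧
  ∀ g h : G, ∃ hn : (Subgroup.zpowers (g ^ 2)).Normal,
    haveI := hn.subgroupOf (Subgroup.closure {g, h})
    (∀ x y : ↥(Subgroup.closure {g, h}) ⧸
        (Subgroup.zpowers (g ^ 2)).subgroupOf (Subgroup.closure {g, h}), x * y = y * x) ∨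
    IsDihedralGroup (↥(Subgroup.closure {g, h}) ⧸
        (Subgroup.zpowers (g ^ 2)).subgroupOf (Subgroup.closure {g, h}))

/-- `G` is the (internal) direct product of its subgroups `E` and `H`. -/
def IsDirectProdDecomp {G : Type*} [Group G] (E H : Subgroup G) : Prop :=
  E.Normal ∧ H.Normal ∧ Disjoint E H ∧ E ⊔ H = ⊤

/-- `H` has a direct factor of order 2. -/
def HasC2DirectFactor (H : Type*) [Group H] : Prop :=
  ∃ C K : Subgroup H, IsDirectProdDecomp C K ∧ Nat.card C = 2

/-- An extraspecial 2-group: centre, commutator subgroup and Frattini subgroup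
coincide and have order 2. -/
def IsExtraspecial2 (H : Type*) [Group H] : Prop :=
  IsPGroup 2 H ∧ Subgroup.center H = commutator H ∧ Subgroup.center H = frattini H ∧
    Nat.card (Subgroup.center H) = 2

/-- Condition (ii): `H` is extraspecial, or the central product of an extraspecial
2-group with a cyclic group of order 4 (amalgamated over the centre of order 2). -/
def CondII (H : Type*) [Group H] : Prop :=
  IsExtraspecial2 H ∨
    ∃ S C : Subgroup H, IsExtraspecial2 S ∧ IsCyclic C ∧ Nat.card C = 4 ∧
      (∀ s ∈ S, ∀ c ∈ C, s * c = c * s) ∧ S ⊔ C = ⊤ ∧ Nat.card ↥(S ⊓ C) = 2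

/-- **Lemma 4.2**: a nonabelian good group with Frattini subgroup of order 2 and no
direct factor of order 2 is extraspecial or the central product of an extraspecial
2-group with a cyclic group of order 4. -/
theorem good_frattini_two (H : Type*) [Group H] (hgood : IsGood H)
    (hna : ¬ ∀ a b : H, a * b = b * a) (hfr : Nat.card (frattini H) = 2)
    (hnf : ¬ HasC2DirectFactor H) : CondII H := by
  classical
  obtain ⟨hp, hgd⟩ := hgood
  have hn : ∀ g : H, (Subgroup.zpowers (g ^ 2)).Normal := fun g => (hgd g g).choose
  have hsqF : ∀ g : H, g ^ 2 ∈ frattini H := aux_sq_mem_frattini hp hn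
  haveI : Fact (Nat.Prime 2) := ⟨Nat.prime_two⟩
  have hcyc : IsCyclic (frattini H) := isCyclic_of_prime_card hfr
  obtain ⟨ζ, hζ⟩ := hcyc.exists_generator
  set z : H := (ζ : H) with hzdef
  have hzF : z ∈ frattini H := ζ.2
  have hFz : frattini H = Subgroup.zpowers z := by
    apply le_antisymm
    · intro x hx
      obtain ⟨k, hk⟩ := hζ ⟨x, hx⟩
      have hk' : ζ ^ k = (⟨x, hx⟩ : frattini H) := hk
      refine ⟨k, ?_⟩
      calc z ^ k = ((ζ ^ k : frattini H) : H) := by push_cast; rfl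
        _ = x := by rw [hk']
    · exact Subgroup.zpowers_le.mpr hzF
  have hordz : orderOf z = 2 := by
    rw [← Nat.card_zpowers z, ← hFz]; exact hfr
  have hz2 : z ^ 2 = 1 := by rw [← hordz]; exact pow_orderOf_eq_one z
  have hz1 : z ≠ 1 := by
    intro h
    rw [h, orderOf_one] at hordz
    norm_num at hordz
  have hzc : ∀ g : H, z * g = g * z := by
    intro g
    have h1 : g * z * g⁻¹ ∈ frattini H :=
      (Subgroup.normal_of_characteristic (frattini H)).conj_mem z hzF g
    rcases aux_eq_one_or_eq hz2 (hFz ▸ h1) with h | h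
    · exfalso
      apply hz1
      have hzeq : z = g⁻¹ * (g * z * g⁻¹) * g := by group
      rw [h] at hzeq
      simpa using hzeq
    · have : g * z = z * g := by
        conv_lhs => rw [show g * z = (g * z * g⁻¹) * g by group]
        rw [h]
      exact this.symm
  have hcentral : ∀ f ∈ frattini H, ∀ g : H, f * g = g * f := by
    intro f hf g
    rcases aux_eq_one_or_eq hz2 (hFz ▸ hf) with h | h
    · rw [h]; simp
    · rw [h]; exact hzc g
  have hsq : ∀ g : H, g ^ 2 = 1 ∨ g ^ 2 = z := fun g => aux_eq_one_or_eq hz2 (hFz ▸ hsqF g)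
  have hcm : ∀ a b : H, ⁅a, b⁆ = 1 ∨ ⁅a, b⁆ = z := fun a b =>
    aux_eq_one_or_eq hz2 (hFz ▸ aux_comm_mem hcentral (hsqF (a*b)) (hsqF a) (hsqF b))
  have hinv : ∀ y : H, (∀ g, y * g = g * y) → y ^ 2 = 1 → y = 1 ∨ y = z := by
    intro y hyc hy2
    by_contra hcon
    push_neg at hcon
    obtain ⟨K, hzK, hyK, hKn, hKsup, -⟩ := aux_zorn_avoid hz2 hsq hcm hcon.1 hcon.2
    apply hnf
    have hynormal : (Subgroup.zpowers y).Normal := by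
      constructor
      intro m hm g
      obtain ⟨k, hk⟩ := hm
      have hk' : y ^ k = m := hk
      have hcom : Commute y g := hyc g
      have heq : g * m * g⁻¹ = m := by
        rw [← hk', ← (hcom.zpow_left k).eq]; group
      rw [heq]; exact ⟨k, hk⟩
    refine ⟨Subgroup.zpowers y, K, ⟨hynormal, hKn, ?_, by rw [sup_comm]; exact hKsup⟩, ?_⟩
    · rw [disjoint_iff, eq_bot_iff]
      intro x hx
      rw [Subgroup.mem_inf] at hx
      rcases aux_eq_one_or_eq hy2 hx.1 with h | h
      · rw [h]; exact Subgroup.one_mem ⊥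
      · exact absurd (h ▸ hx.2) hyK
    · rw [Nat.card_zpowers]; exact orderOf_eq_prime hy2 hcon.1
  push_neg at hna
  obtain ⟨a0, b0, hab⟩ := hna
  by_cases hZ : ∀ y ∈ Subgroup.center H, y ∈ Subgroup.zpowers z
  · -- extraspecial case
    left
    have hzcen : Subgroup.zpowers z ≤ Subgroup.center H :=
      Subgroup.zpowers_le.mpr (Subgroup.mem_center_iff.mpr fun g => (hzc g).symm)
    have hcen_eq : Subgroup.center H = Subgroup.zpowers z := le_antisymm hZ hzcen
    have hcomm_eq : commutator H = Subgroup.zpowers z := by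
      apply le_antisymm
      · have hrfl : commutator H = ⁅(⊤ : Subgroup H), ⊤⁆ := rfl
        rw [hrfl, Subgroup.commutator_le]
        intro g1 _ g2 _
        rcases hcm g1 g2 with h | h
        · rw [h]; exact Subgroup.one_mem _
        · rw [h]; exact Subgroup.mem_zpowers z
      · apply Subgroup.zpowers_le.mpr
        have h1 : ⁅a0, b0⁆ ≠ 1 := fun h => hab (commutatorElement_eq_one_iff_mul_comm.mp h)
        rcases hcm a0 b0 with h | h
        · exact absurd h h1
        · exact h ▸ Subgroup.commutator_mem_commutator (Subgroup.mem_top a0) (Subgroup.mem_top b0)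
    exact ⟨hp, by rw [hcen_eq, hcomm_eq], by rw [hcen_eq, hFz],
      by rw [hcen_eq, ← hFz]; exact hfr⟩
  · -- central product case
    right
    push_neg at hZ
    obtain ⟨c, hcZ, hcz⟩ := hZ
    have hccomm : ∀ g : H, c * g = g * c := fun g => (Subgroup.mem_center_iff.mp hcZ g).symm
    have hc1 : c ≠ 1 := fun h => hcz (h ▸ Subgroup.one_mem _)
    have hcneqz : c ≠ z := fun h => hcz (h ▸ Subgroup.mem_zpowers z)
    have hc2 : c ^ 2 = z := by
      rcases hsq c with h | h
      · rcases hinv c hccomm h with h1 | h1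
        · exact absurd h1 hc1
        · exact absurd h1 hcneqz
      · exact h
    have hc4 : c ^ (4:ℕ) = 1 := by
      rw [show (4:ℕ) = 2 * 2 from rfl, pow_mul, hc2, hz2]
    have hordc : orderOf c = 4 := by
      have h := orderOf_eq_prime_pow (x := c) (p := 2) (n := 1) ?_ ?_
      · simpa using h
      · rw [pow_one, hc2]; exact hz1
      · show c ^ (2^2 : ℕ) = 1
        norm_num
        exact hc4
    obtain ⟨S, hzS, hcS, hSn, hSsup, hScoatom⟩ := aux_zorn_avoid hz2 hsq hcm hc1 hcneqz
    have hc3S : c^2*c ∉ S := by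
      intro h
      apply hcS
      have hceq : c = z⁻¹ * (c^2*c) := by rw [← hc2]; group
      rw [hceq]
      exact S.mul_mem (S.inv_mem hzS) h
    have hczpn : (Subgroup.zpowers c).Normal := by
      constructor
      intro m hm g
      obtain ⟨k, hk⟩ := hm
      have hk' : c ^ k = m := hk
      have hcom : Commute c g := hccomm g
      have heq : g * m * g⁻¹ = m := by rw [← hk', ← (hcom.zpow_left k).eq]; group
      rw [heq]; exact ⟨k, hk⟩
    have hdec : ∀ h : H, ∃ s ∈ S, ∃ j : ℤ, h = s * c ^ j := by
      intro h
      haveI := hczpn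
      have hmem : h ∈ (S : Set H) * (Subgroup.zpowers c : Set H) := by
        rw [← Subgroup.mul_normal S (Subgroup.zpowers c), hSsup]; trivial
      obtain ⟨s, hs, y, hy, hsy⟩ := hmem
      obtain ⟨j, hj⟩ := hy
      have hj' : c ^ j = y := hj
      exact ⟨s, hs, j, by rw [← hsy, ← hj']⟩
    obtain ⟨s1, hs1, j1, ha0⟩ := hdec a0
    obtain ⟨s2, hs2, j2, hb0⟩ := hdec b0
    have hcj : ∀ (j : ℤ) (g : H), c ^ j * g = g * c ^ j :=
      fun j g => ((show Commute c g from hccomm g).zpow_left j).eq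
    have hs12 : s1 * s2 ≠ s2 * s1 := by
      intro h
      apply hab
      rw [ha0, hb0]
      calc s1 * c ^ j1 * (s2 * c ^ j2)
          = s1 * (c ^ j1 * s2) * c ^ j2 := by group
        _ = s1 * (s2 * c ^ j1) * c ^ j2 := by rw [hcj j1 s2]
        _ = s1 * s2 * (c ^ (j1 + j2)) := by rw [zpow_add]; group
        _ = s2 * s1 * (c ^ (j2 + j1)) := by rw [h, add_comm]
        _ = s2 * (s1 * c ^ j2) * c ^ j1 := by rw [zpow_add]; group
        _ = s2 * (c ^ j2 * s1) * c ^ j1 := by rw [hcj j2 s1]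
        _ = s2 * c ^ j2 * (s1 * c ^ j1) := by group
    set z' : S := ⟨z, hzS⟩ with hz'def
    have hz2' : z' ^ 2 = 1 := by
      apply Subtype.ext
      push_cast
      exact hz2
    have hz1' : z' ≠ 1 := fun h => hz1 (congrArg Subtype.val h)
    have hsq' : ∀ u : S, u ^ 2 = 1 ∨ u ^ 2 = z' := by
      intro u
      rcases hsq (u : H) with h | h
      · left; apply Subtype.ext; push_cast; exact h
      · right; apply Subtype.ext; push_cast; exact h
    have hcoe_comm : ∀ u v : S, ((⁅u, v⁆ : S) : H) = ⁅(u:H), (v:H)⁆ := by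
      intro u v; simp [commutatorElement_def]
    have hcm' : ∀ u v : S, ⁅u, v⁆ = 1 ∨ ⁅u, v⁆ = z' := by
      intro u v
      rcases hcm (u:H) (v:H) with h | h
      · left; apply Subtype.ext; rw [hcoe_comm]; simpa using h
      · right; apply Subtype.ext; rw [hcoe_comm]; simpa using h
    have hz'c : ∀ u : S, z' * u = u * z' := fun u => Subtype.ext (hzc u)
    set u1 : S := ⟨s1, hs1⟩ with hu1def
    set u2 : S := ⟨s2, hs2⟩ with hu2def
    have hu12 : ⁅u1, u2⁆ = z' := by
      rcases hcm' u1 u2 with h | h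
      · exfalso
        apply hs12
        have hcoe := congrArg Subtype.val h
        rw [hcoe_comm] at hcoe
        simp only [OneMemClass.coe_one] at hcoe
        exact commutatorElement_eq_one_iff_mul_comm.mp hcoe
      · exact h
    have hcenH : ∀ y ∈ Subgroup.center H, y ∈ Subgroup.zpowers c := by
      intro y hy
      have hyc : ∀ g, y * g = g * y := fun g => (Subgroup.mem_center_iff.mp hy g).symm
      rcases hsq y with h1 | h1
      · rcases hinv y hyc h1 with h2 | h2
        · rw [h2]; exact Subgroup.one_mem _
        · rw [h2, ← hc2]
          exact Subgroup.npow_mem_zpowers c 2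
      · have hyc2 : (y*c)^2 = 1 := by
          rw [pow_two]
          calc y*c*(y*c) = y*(c*y)*c := by group
            _ = y*(y*c)*c := by rw [hccomm y]
            _ = (y*y)*(c*c) := by group
            _ = y^2 * c^2 := by rw [pow_two, pow_two]
            _ = z * z := by rw [h1, hc2]
            _ = z^2 := by rw [pow_two]
            _ = 1 := hz2
        have hycc : ∀ g, (y*c) * g = g * (y*c) := by
          intro g
          calc y*c*g = y*(c*g) := by group
            _ = y*(g*c) := by rw [hccomm g]
            _ = (y*g)*c := by group
            _ = (g*y)*c := by rw [hyc g]
            _ = g*(y*c) := by group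
        rcases hinv (y*c) hycc hyc2 with h | h
        · have : y = c⁻¹ := eq_inv_of_mul_eq_one_left h
          rw [this]
          exact Subgroup.inv_mem _ (Subgroup.mem_zpowers c)
        · have h2 : y * c = c * c := by rw [h, ← hc2, pow_two]
          have : y = c := mul_right_cancel h2
          rw [this]
          exact Subgroup.mem_zpowers c
    have hScen : Subgroup.center S = Subgroup.zpowers z' := by
      apply le_antisymm
      · intro u hu
        have hucH : (u:H) ∈ Subgroup.center H := by
          rw [Subgroup.mem_center_iff]
          intro g
          obtain ⟨s, hs, j, rfl⟩ := hdec g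
          have hus : s * (u:H) = (u:H) * s := by
            have := Subgroup.mem_center_iff.mp hu ⟨s, hs⟩
            exact congrArg Subtype.val this
          calc s * c^j * u = s * (c^j * u) := by group
            _ = s * (u * c^j) := by rw [hcj j (u:H)]
            _ = (s*u)*c^j := by group
            _ = (u*s)*c^j := by rw [hus]
            _ = u * (s * c^j) := by group
        have hmemc : (u:H) ∈ Subgroup.zpowers c := hcenH _ hucH
        rcases aux_mem_zpowers_four hc4 hmemc with h | h | h | h
        · have : u = 1 := Subtype.ext h
          rw [this]; exact Subgroup.one_mem _
        · exact absurd (h ▸ u.2) hcS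
        · have : u = z' := Subtype.ext (by rw [h, hc2])
          rw [this]; exact Subgroup.mem_zpowers z'
        · exact absurd (h ▸ u.2) hc3S
      · exact Subgroup.zpowers_le.mpr (Subgroup.mem_center_iff.mpr fun u => (hz'c u).symm)
    have hScomm : commutator S = Subgroup.zpowers z' := by
      apply le_antisymm
      · have hrfl : commutator S = ⁅(⊤ : Subgroup S), ⊤⁆ := rfl
        rw [hrfl, Subgroup.commutator_le]
        intro g1 _ g2 _
        rcases hcm' g1 g2 with h | h
        · rw [h]; exact Subgroup.one_mem _
        · rw [h]; exact Subgroup.mem_zpowers z'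
      · exact Subgroup.zpowers_le.mpr
          (hu12 ▸ Subgroup.commutator_mem_commutator (Subgroup.mem_top u1) (Subgroup.mem_top u2))
    have hz'zpn : (Subgroup.zpowers z').Normal := by
      constructor
      intro m hm g
      obtain ⟨k, hk⟩ := hm
      have hk' : z' ^ k = m := hk
      have heq : g * m * g⁻¹ = m := by
        rw [← hk', ← ((show Commute z' g from hz'c g).zpow_left k).eq]; group
      rw [heq]; exact ⟨k, hk⟩
    have hSfrat : frattini S = Subgroup.zpowers z' := by
      apply le_antisymm
      · intro u hu
        by_contra hun
        have hu1 : u ≠ 1 := fun h => hun (h ▸ Subgroup.one_mem _)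
        have huz : u ≠ z' := fun h => hun (h ▸ Subgroup.mem_zpowers z')
        obtain ⟨K, hzK', huK, hKn', hKsup', hKco⟩ := aux_zorn_avoid hz2' hsq' hcm' hu1 huz
        have hcoatom : IsCoatom K := by
          constructor
          · intro h; exact huK (h ▸ Subgroup.mem_top u)
          · exact fun J hJ => hKco J hJ
        exact huK (frattini_le_coatom hcoatom hu)
      · have hzin : ∀ M : Subgroup S, IsCoatom M → z' ∈ M := by
          intro M hM
          by_contra hzM
          have hsup : M ⊔ Subgroup.zpowers z' = ⊤ :=
            hM.2 _ (lt_of_le_of_ne le_sup_left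
              (fun h => hzM (h ▸ Subgroup.mem_sup_right (Subgroup.mem_zpowers z'))))
          haveI := hz'zpn
          have hd : ∀ w : S, ∃ m ∈ M, ∃ k : ℤ, w = m * z' ^ k := by
            intro w
            have : w ∈ (M : Set S) * (Subgroup.zpowers z' : Set S) := by
              rw [← Subgroup.mul_normal M (Subgroup.zpowers z'), hsup]; trivial
            obtain ⟨m, hm, y, hy, hmy⟩ := this
            obtain ⟨k, hk⟩ := hy
            have hk' : z' ^ k = y := hk
            exact ⟨m, hm, k, by rw [← hmy, ← hk']⟩
          obtain ⟨m1, hm1, k1, he1⟩ := hd u1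
          obtain ⟨m2, hm2, k2, he2⟩ := hd u2
          have hz'k : ∀ k : ℤ, ∀ g : S, z' ^ k * g = g * z' ^ k :=
            fun k g => ((show Commute z' g from hz'c g).zpow_left k).eq
          have hcc : ⁅u1, u2⁆ = ⁅m1, m2⁆ := by
            rw [he1, he2]
            exact aux_comm_central_cancel m1 m2 (z'^k1) (z'^k2) (hz'k k1) (hz'k k2)
          rw [hu12] at hcc
          apply hzM
          rw [hcc, commutatorElement_def]
          exact M.mul_mem (M.mul_mem (M.mul_mem hm1 hm2) (M.inv_mem hm1)) (M.inv_mem hm2)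
        apply Subgroup.zpowers_le.mpr
        exact Subgroup.mem_iInf.mpr fun M => Subgroup.mem_iInf.mpr fun hM => hzin M hM
    have hordz' : orderOf z' = 2 := orderOf_eq_prime hz2' hz1'
    refine ⟨S, Subgroup.zpowers c,
      ⟨hp.to_subgroup S, by rw [hScen, hScomm], by rw [hScen, hSfrat],
        by rw [hScen, Nat.card_zpowers]; exact hordz'⟩,
      aux_isCyclic_zpowers c,
      by rw [Nat.card_zpowers]; exact hordc,
      ?_, hSsup, ?_⟩
    · intro s hs x hx
      obtain ⟨k, hk⟩ := hx
      have hk' : c ^ k = x := hk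
      rw [← hk']
      exact (hcj k s).symm
    · have hinter : S ⊓ Subgroup.zpowers c = Subgroup.zpowers z := by
        apply le_antisymm
        · intro x hx
          rw [Subgroup.mem_inf] at hx
          rcases aux_mem_zpowers_four hc4 hx.2 with h | h | h | h
          · rw [h]; exact Subgroup.one_mem _
          · exact absurd (h ▸ hx.1) hcS
          · rw [h, hc2]; exact Subgroup.mem_zpowers z
          · exact absurd (h ▸ hx.1) hc3S
        · apply Subgroup.zpowers_le.mpr
          rw [Subgroup.mem_inf]
          refine ⟨hzS, ?_⟩
          rw [← hc2]
          exact Subgroup.npow_mem_zpowers c 2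
      rw [hinter, Nat.card_zpowers]
      exact hordz
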